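/- For every n ≥ 1, M ≥ 1, and ε > 0, there exist positive integers M₁, M₂ such that, letting p = M₂/(M₁+M₂), one has 1 - p^{n+1} ≤ ε and (1 - p^n)·(M₁+M₂)/n ≥ M. -/

import Mathlib

/-- Arithmetic core of the arbitrarily-severe Reuse Bias construction: for every
`n ≥ 1`, `M ≥ 1` and `ε > 0` there are positive integers `M₁, M₂` such that, with
`p = M₂ / (M₁ + M₂)`, we have `1 - p ^ (n+1) ≤ ε` and
`(1 - p ^ n) * (M₁ + M₂) / n ≥ M`. -/
theorem stmt_7 (n : ℕ) (hn : 1 ≤ n) (M : ℝ) (hM : 1 ≤ M) (ε : ℝ) (hε : 0 < ε) :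
    ∃ M₁ M₂ : ℕ, 0 < M₁ ∧ 0 < M₂ ∧
      (1 - ((M₂ : ℝ) / (M₁ + M₂)) ^ (n + 1) ≤ ε ∧
       (1 - ((M₂ : ℝ) / (M₁ + M₂)) ^ n) * ((M₁ : ℝ) + M₂) / n ≥ M) := by
  obtain ⟨a, ha⟩ := exists_nat_ge (((n : ℝ) + 1) / ε)
  -- p = (a+1)/(a+2)
  have hb0 : (0 : ℝ) < (a : ℝ) + 2 := by positivity
  have hab : ((a : ℝ) + 1) / ((a : ℝ) + 2) = 1 - 1 / ((a : ℝ) + 2) := by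
    rw [eq_sub_iff_add_eq, ← add_div, div_eq_one_iff_eq (ne_of_gt hb0)]; ring
  have hplt : ((a : ℝ) + 1) / ((a : ℝ) + 2) < 1 := by
    rw [div_lt_one hb0]; linarith
  have hpnn : (0 : ℝ) ≤ ((a : ℝ) + 1) / ((a : ℝ) + 2) := by positivity
  have hc : (0 : ℝ) < 1 - (((a : ℝ) + 1) / ((a : ℝ) + 2)) ^ n := by
    have := pow_lt_one₀ hpnn hplt (Nat.one_le_iff_ne_zero.mp hn)
    linarith
  obtain ⟨x0, hx0⟩ :=
    exists_nat_ge (M * n / (((a : ℝ) + 2) * (1 - (((a : ℝ) + 1) / ((a : ℝ) + 2)) ^ n)))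
  refine ⟨x0 + 1, (a + 1) * (x0 + 1), Nat.succ_pos _, by positivity, ?_⟩
  have hxR : (0 : ℝ) < (x0 : ℝ) + 1 := by positivity
  have hfrac : (((a + 1) * (x0 + 1) : ℕ) : ℝ) / (((x0 + 1 : ℕ) : ℝ) + ((a + 1) * (x0 + 1) : ℕ))
      = ((a : ℝ) + 1) / ((a : ℝ) + 2) := by
    push_cast
    rw [show ((x0:ℝ) + 1) + ((a:ℝ) + 1) * ((x0:ℝ) + 1) = ((a:ℝ) + 2) * ((x0:ℝ) + 1) by ring,
        show ((a:ℝ) + 1) * ((x0:ℝ) + 1) = ((x0:ℝ) + 1) * ((a:ℝ) + 1) by ring,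
        show ((a:ℝ) + 2) * ((x0:ℝ) + 1) = ((x0:ℝ) + 1) * ((a:ℝ) + 2) by ring,
        mul_div_mul_left _ _ (ne_of_gt hxR)]
  rw [hfrac]
  constructor
  · -- 1 - p^{n+1} ≤ ε
    rw [hab]
    have hber : 1 + ((n : ℝ) + 1) * (-(1 / ((a : ℝ) + 2)))
        ≤ (1 + (-(1 / ((a : ℝ) + 2)))) ^ (n + 1) := by
      have h1 : (-2 : ℝ) ≤ -(1 / ((a : ℝ) + 2)) := by
        have : (1 : ℝ) / ((a : ℝ) + 2) ≤ 1 := by rw [div_le_one hb0]; linarith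
        linarith
      have := one_add_mul_le_pow h1 (n + 1)
      push_cast at this
      linarith
    push_cast at hber
    have hεb : ((n : ℝ) + 1) / ((a : ℝ) + 2) ≤ ε := by
      rw [div_le_iff₀ hb0]
      calc (n : ℝ) + 1 = (((n : ℝ) + 1) / ε) * ε := by field_simp
        _ ≤ (a : ℝ) * ε := mul_le_mul_of_nonneg_right ha hε.le
        _ ≤ ε * ((a : ℝ) + 2) := by nlinarith
    have h2 : (1 : ℝ) - 1 / ((a : ℝ) + 2) = 1 + (-(1 / ((a : ℝ) + 2))) := by ring
    rw [h2]
    have h3 : ((n : ℝ) + 1) * -(1 / ((a : ℝ) + 2)) = -(((n : ℝ) + 1) / ((a : ℝ) + 2)) := by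
      ring
    rw [h3] at hber
    linarith
  · -- (1 - p^n)(M₁+M₂)/n ≥ M
    have hsum : (((x0 + 1 : ℕ) : ℝ) + ((a + 1) * (x0 + 1) : ℕ))
        = ((a : ℝ) + 2) * ((x0 : ℝ) + 1) := by push_cast; ring
    rw [hsum]
    have hn0 : (0 : ℝ) < n := by exact_mod_cast hn
    rw [ge_iff_le, le_div_iff₀ hn0]
    have hbc : (0 : ℝ) < ((a : ℝ) + 2) * (1 - (((a : ℝ) + 1) / ((a : ℝ) + 2)) ^ n) := by
      positivity
    rw [div_le_iff₀ hbc] at hx0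
    have hx1 : (x0 : ℝ) ≤ (x0 : ℝ) + 1 := by linarith
    nlinarith [hx0, hbc]
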